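/- arXiv:1310.3204 — 2 statements merged into one kernel-verified Lean document; each statement's English description precedes it below -/
import Mathlib

section
/- Let G be a bipartite graph. Then the extended double cover G* and the double graph D[G] have equal energy, E(G*) = E(D[G]) = 2E(G), if and only if every adjacency eigenvalue λᵢ of G satisfies |λᵢ| ≥ 1. -/
open Matrix Polynomial BigOperators
open scoped Classical Kronecker


variable {m : Type*} [Fintype m] [DecidableEq m]

lemma my_charpoly_conj (P Q M : Matrix m m ℝ) (h : P * Q = 1) :
    (P * M * Q).charpoly = M.charpoly := by
  have hc : charmatrix (P * M * Q) = P.map C * charmatrix M * Q.map C := by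
    simp only [charmatrix, Matrix.mul_sub, Matrix.sub_mul]
    congr 1
    · have hPQ : (P.map C : Matrix m m ℝ[X]) * Q.map C = 1 := by
        rw [← Matrix.map_mul, h, Matrix.map_one _ (map_zero C) (map_one C)]
      calc Matrix.scalar m (X : ℝ[X])
          = Matrix.scalar m (X : ℝ[X]) * (P.map C * Q.map C) := by rw [hPQ, mul_one]
        _ = P.map C * Matrix.scalar m (X : ℝ[X]) * Q.map C := by
            rw [← mul_assoc, (Matrix.scalar_commute (X : ℝ[X]) (fun r => (Commute.all _ _)) (P.map C)).eq]
    · simp [RingHom.mapMatrix_apply, Matrix.map_mul]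
  unfold Matrix.charpoly
  rw [hc, det_mul, det_mul]
  have hPQ : (P.map C : Matrix m m ℝ[X]).det * (Q.map C).det = 1 := by
    rw [← det_mul, ← Matrix.map_mul, h, Matrix.map_one _ (map_zero C) (map_one C), det_one]
  linear_combination (charmatrix M).det * hPQ

lemma my_charpoly_diagonal (d : m → ℝ) :
    (Matrix.diagonal d).charpoly = ∏ i, (X - C (d i)) := by
  have : charmatrix (Matrix.diagonal d) = Matrix.diagonal fun i => (X : ℝ[X]) - C (d i) := by
    ext i j
    by_cases hij : i = j
    · subst hij; simp [charmatrix_apply_eq]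
    · simp [charmatrix_apply_ne _ _ _ hij, Matrix.diagonal_apply_ne _ hij]
  rw [Matrix.charpoly, this, det_diagonal]

lemma my_herm_charpoly (M : Matrix m m ℝ) (h : M.IsHermitian) (a b : ℝ) :
    (a • M + b • 1).charpoly = ∏ i, (X - C (a * h.eigenvalues i + b)) := by
  set U := (Matrix.IsHermitian.eigenvectorUnitary h : Matrix m m ℝ) with hUdef
  have hU : U * star U = 1 := Matrix.mem_unitaryGroup_iff.mp (Matrix.IsHermitian.eigenvectorUnitary h).2
  have hspec : M = U * Matrix.diagonal h.eigenvalues * star U := by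
    have := h.spectral_theorem
    simpa [RCLike.ofReal_real_eq_id] using this
  have key : a • M + b • 1 =
      U * Matrix.diagonal (fun i => a * h.eigenvalues i + b) * star U := by
    have hdiag : (Matrix.diagonal (fun i => a * h.eigenvalues i + b) : Matrix m m ℝ)
        = a • Matrix.diagonal h.eigenvalues + b • 1 := by
      rw [← Matrix.diagonal_one, ← Matrix.diagonal_smul, ← Matrix.diagonal_smul,
        Matrix.diagonal_add]
      congr 1; ext i; simp [mul_comm]
    rw [hdiag, Matrix.mul_add, Matrix.add_mul, Matrix.mul_smul, Matrix.smul_mul,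
      Matrix.mul_smul, Matrix.smul_mul, Matrix.mul_one, hU, ← hspec]
  rw [key, my_charpoly_conj _ _ _ hU, my_charpoly_diagonal]

lemma my_multiset_eq {ι κ : Type*} [Fintype ι] [Fintype κ] (f : ι → ℝ) (g : κ → ℝ)
    (h : ∏ i, (X - C (f i)) = ∏ j, (X - C (g j))) :
    Multiset.map f Finset.univ.val = Multiset.map g Finset.univ.val := by
  have h1f : (∏ i, (X - C (f i))) = ((Multiset.map f Finset.univ.val).map fun a => X - C a).prod := by
    rw [Multiset.map_map]; rfl
  have h1g : (∏ j, (X - C (g j))) = ((Multiset.map g Finset.univ.val).map fun a => X - C a).prod := by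
    rw [Multiset.map_map]; rfl
  have hfg : ((Multiset.map f Finset.univ.val).map fun a => X - C a).prod
      = ((Multiset.map g Finset.univ.val).map fun a => X - C a).prod := by
    rw [← h1f, ← h1g]; exact h
  have h2 := congrArg Polynomial.roots hfg
  rwa [Polynomial.roots_multiset_prod_X_sub_C,
    Polynomial.roots_multiset_prod_X_sub_C] at h2

lemma my_sum_congr {ι κ : Type*} [Fintype ι] [Fintype κ] (f : ι → ℝ) (g : κ → ℝ)
    (h : Multiset.map f Finset.univ.val = Multiset.map g Finset.univ.val) (F : ℝ → ℝ) :
    ∑ i, F (f i) = ∑ j, F (g j) := by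
  have h2 : Multiset.map (F ∘ f) Finset.univ.val = Multiset.map (F ∘ g) Finset.univ.val := by
    rw [← Multiset.map_map, h, Multiset.map_map]
  calc ∑ i, F (f i) = (Multiset.map (F ∘ f) Finset.univ.val).sum := rfl
    _ = (Multiset.map (F ∘ g) Finset.univ.val).sum := by rw [h2]
    _ = ∑ j, F (g j) := rfl

section blocks
variable (A B : Matrix m m ℝ)

noncomputable def Pblk : Matrix (m ⊕ m) (m ⊕ m) ℝ := Matrix.fromBlocks 1 1 1 (-1)

lemma Pblk_mul_smul : (Pblk : Matrix (m ⊕ m) (m ⊕ m) ℝ) * ((2⁻¹ : ℝ) • Pblk) = 1 := by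
  rw [Matrix.mul_smul, Pblk, Matrix.fromBlocks_multiply, Matrix.fromBlocks_smul]
  have hx : (2⁻¹:ℝ) • ((1:Matrix m m ℝ) * 1 + 1 * 1) = 1 := by
    simp only [one_mul, smul_add, ← add_smul]; norm_num
  have hy : (2⁻¹:ℝ) • ((1:Matrix m m ℝ) * 1 + 1 * (-1)) = 0 := by simp
  have hz : (2⁻¹:ℝ) • ((1:Matrix m m ℝ) * 1 + (-1) * 1) = 0 := by simp
  have hw : (2⁻¹:ℝ) • ((1:Matrix m m ℝ) * 1 + (-1) * (-1)) = 1 := by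
    simp only [one_mul, neg_mul_neg, smul_add, ← add_smul]; norm_num
  rw [hx, hy, hz, hw, Matrix.fromBlocks_one]

lemma conjD : (Pblk : Matrix (m ⊕ m) (m ⊕ m) ℝ) * Matrix.fromBlocks ((2:ℝ) • A) 0 0 0
    * ((2⁻¹ : ℝ) • Pblk) = Matrix.fromBlocks A A A A := by
  rw [Matrix.mul_smul, Pblk, Matrix.fromBlocks_multiply, Matrix.fromBlocks_multiply,
    Matrix.fromBlocks_smul]
  congr 1 <;> simp <;> module

lemma conjS : (Pblk : Matrix (m ⊕ m) (m ⊕ m) ℝ) * Matrix.fromBlocks B 0 0 (-B)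
    * ((2⁻¹ : ℝ) • Pblk) = Matrix.fromBlocks 0 B B 0 := by
  rw [Matrix.mul_smul, Pblk, Matrix.fromBlocks_multiply, Matrix.fromBlocks_multiply,
    Matrix.fromBlocks_smul]
  congr 1 <;> simp <;> module

end blocks

lemma my_pt_le (x : ℝ) : 2 * |x| ≤ |x + 1| + |x - 1| := by
  have h : 2 * |x| = |(x + 1) + (x - 1)| := by
    rw [show (x+1) + (x-1) = 2 * x by ring, abs_mul]; norm_num
  rw [h]; exact abs_add_le _ _

lemma my_pt_iff (x : ℝ) : 2 * |x| = |x + 1| + |x - 1| ↔ 1 ≤ |x| := by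
  rcases abs_cases x with ⟨h1, h2⟩ | ⟨h1, h2⟩ <;>
    rcases abs_cases (x + 1) with ⟨h3, h4⟩ | ⟨h3, h4⟩ <;>
    rcases abs_cases (x - 1) with ⟨h5, h6⟩ | ⟨h5, h6⟩ <;>
    constructor <;> intro h <;> linarith

lemma fin2cases (x : Fin 2) : x = 0 ∨ x = 1 := by omega

/-- Let `G` be a bipartite graph.  Then the extended double cover `G*`
(adjacency matrix `[[0, A+I],[A+I, 0]]`) and the double graph `D[G]` (adjacency
matrix `[[A,A],[A,A]]`) have equal energy, `E(G*) = E(D[G]) = 2E(G)`, if and only if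
every adjacency eigenvalue `λᵢ` of `G` satisfies `|λᵢ| ≥ 1`. -/
theorem stmt7 {n : ℕ} (G : SimpleGraph (Fin n)) (hbip : G.Colorable 2)
    (A : Matrix (Fin n) (Fin n) ℝ) (hA : A = G.adjMatrix ℝ) (hHerm : A.IsHermitian)
    (hStar : (Matrix.fromBlocks 0 (A + 1) (A + 1) 0).IsHermitian)
    (hD : (Matrix.fromBlocks A A A A).IsHermitian) :
    (∑ p, |hStar.eigenvalues p| = ∑ q, |hD.eigenvalues q| ∧
        ∑ q, |hD.eigenvalues q| = 2 * ∑ i, |hHerm.eigenvalues i|) ↔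
      ∀ i, 1 ≤ |hHerm.eigenvalues i| := by
  set lam := hHerm.eigenvalues with hlam
  -- ## the double graph D[G]
  have cD1 : (Matrix.fromBlocks A A A A).charpoly = ∏ p, (X - C (hD.eigenvalues p)) := by
    have h := my_herm_charpoly _ hD 1 0
    simpa using h
  have cD2 : (Matrix.fromBlocks A A A A).charpoly
      = (∏ i, (X - C ((2:ℝ) * lam i + 0))) * ∏ i : Fin n, (X - C ((0:ℝ) * lam i + 0)) := by
    rw [← conjD A, my_charpoly_conj _ _ _ Pblk_mul_smul, Matrix.charpoly_fromBlocks_zero₂₁]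
    congr 1
    · have h := my_herm_charpoly A hHerm 2 0
      rw [show (2:ℝ) • A + (0:ℝ) • (1 : Matrix (Fin n) (Fin n) ℝ) = (2:ℝ) • A by simp] at h
      exact h
    · have h := my_herm_charpoly A hHerm 0 0
      rw [show (0:ℝ) • A + (0:ℝ) • (1 : Matrix (Fin n) (Fin n) ℝ) = 0 by simp] at h
      exact h
  have mD : Multiset.map hD.eigenvalues Finset.univ.val
      = Multiset.map (Sum.elim (fun i => (2:ℝ) * lam i + 0) (fun i : Fin n => (0:ℝ) * lam i + 0))
          Finset.univ.val := by
    apply my_multiset_eq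
    rw [← cD1, cD2, Fintype.prod_sum_type]
    simp
  have ED : ∑ q, |hD.eigenvalues q| = 2 * ∑ i, |lam i| := by
    have h := my_sum_congr _ _ mD (fun x => |x|)
    rw [h, Fintype.sum_sum_type]
    simp [abs_mul, Finset.mul_sum]
  -- ## the extended double cover G*
  have cS1 : (Matrix.fromBlocks 0 (A + 1) (A + 1) 0).charpoly
      = ∏ p, (X - C (hStar.eigenvalues p)) := by
    have h := my_herm_charpoly _ hStar 1 0
    simpa using h
  have cS2 : (Matrix.fromBlocks 0 (A + 1) (A + 1) 0).charpoly
      = (∏ i, (X - C ((1:ℝ) * lam i + 1))) * ∏ i : Fin n, (X - C ((-1:ℝ) * lam i + (-1))) := by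
    rw [← conjS (A + 1), my_charpoly_conj _ _ _ Pblk_mul_smul, Matrix.charpoly_fromBlocks_zero₂₁]
    congr 1
    · have h := my_herm_charpoly A hHerm 1 1
      rw [show (1:ℝ) • A + (1:ℝ) • (1 : Matrix (Fin n) (Fin n) ℝ) = A + 1 by simp] at h
      exact h
    · have h := my_herm_charpoly A hHerm (-1) (-1)
      rw [show (-1:ℝ) • A + (-1:ℝ) • (1 : Matrix (Fin n) (Fin n) ℝ) = -(A + 1) by
        simp [neg_add, add_comm]] at h
      exact h
  have mS : Multiset.map hStar.eigenvalues Finset.univ.val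
      = Multiset.map (Sum.elim (fun i => (1:ℝ) * lam i + 1) (fun i : Fin n => (-1:ℝ) * lam i + (-1)))
          Finset.univ.val := by
    apply my_multiset_eq
    rw [← cS1, cS2, Fintype.prod_sum_type]
    simp
  have ES : ∑ p, |hStar.eigenvalues p| = 2 * ∑ i, |lam i + 1| := by
    have h := my_sum_congr _ _ mS (fun x => |x|)
    rw [h, Fintype.sum_sum_type]
    simp only [Sum.elim_inl, Sum.elim_inr]
    have h2 : ∀ i : Fin n, |(-1:ℝ) * lam i + (-1)| = |lam i + 1| := by
      intro i
      rw [show (-1:ℝ) * lam i + (-1) = -(lam i + 1) by ring, abs_neg]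
    rw [Finset.sum_congr rfl (fun i _ => h2 i)]
    simp only [one_mul]
    rw [two_mul]
  -- ## bipartite symmetry of the spectrum
  have hsymm : ∑ i, |lam i + 1| = ∑ i, |lam i - 1| := by
    obtain ⟨c⟩ := hbip
    set w : Fin n → ℝ := fun i => if c i = 0 then 1 else -1 with hw
    have hww : Matrix.diagonal w * Matrix.diagonal w = 1 := by
      rw [Matrix.diagonal_mul_diagonal]
      have hfun : (fun i => w i * w i) = fun _ : Fin n => (1:ℝ) := by
        funext i
        by_cases h : c i = 0 <;> simp [hw, h]
      rw [hfun, Matrix.diagonal_one]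
    have hWAW : Matrix.diagonal w * A * Matrix.diagonal w = -A := by
      ext i j
      rw [Matrix.mul_diagonal, Matrix.diagonal_mul, hA]
      by_cases hadj : G.Adj i j
      · have hne : c i ≠ c j := c.valid hadj
        have hwij : w i * w j = -1 := by
          rcases fin2cases (c i) with h1 | h1 <;> rcases fin2cases (c j) with h2 | h2 <;>
            first
            | (exact absurd (h1.trans h2.symm) hne)
            | (simp [hw, h1, h2])
        simp [hadj]
        exact hwij
      · simp [hadj]
    have hcneg : (-A).charpoly = A.charpoly := by
      have h := my_charpoly_conj (Matrix.diagonal w) (Matrix.diagonal w) A hww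
      rw [hWAW] at h
      exact h
    have hprod : (∏ i, (X - C ((-1:ℝ) * lam i + 0))) = ∏ i, (X - C ((1:ℝ) * lam i + 0)) := by
      have h1 := my_herm_charpoly A hHerm (-1) 0
      have h2 := my_herm_charpoly A hHerm 1 0
      rw [show (-1:ℝ) • A + (0:ℝ) • (1 : Matrix (Fin n) (Fin n) ℝ) = -A by simp] at h1
      rw [show (1:ℝ) • A + (0:ℝ) • (1 : Matrix (Fin n) (Fin n) ℝ) = A by simp] at h2
      rw [← h1, ← h2, hcneg]
    have mneg := my_multiset_eq _ _ hprod
    have h := my_sum_congr _ _ mneg (fun x => |x - 1|)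
    calc ∑ i, |lam i + 1|
        = ∑ i, |(-1:ℝ) * lam i + 0 - 1| := by
          refine Finset.sum_congr rfl fun i _ => ?_
          rw [show (-1:ℝ) * lam i + 0 - 1 = -(lam i + 1) by ring, abs_neg]
      _ = ∑ i, |(1:ℝ) * lam i + 0 - 1| := h
      _ = ∑ i, |lam i - 1| := by
          refine Finset.sum_congr rfl fun i _ => ?_
          norm_num
  -- ## conclusion
  rw [ES, ED]
  constructor
  · rintro ⟨h1, -⟩
    have hsum : ∑ i, 2 * |lam i| = ∑ i, (|lam i + 1| + |lam i - 1|) := by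
      rw [Finset.sum_add_distrib, ← hsymm, ← Finset.mul_sum]
      linarith
    have hle : ∀ i ∈ Finset.univ, 2 * |lam i| ≤ |lam i + 1| + |lam i - 1| :=
      fun i _ => my_pt_le (lam i)
    have hpt := (Finset.sum_eq_sum_iff_of_le hle).mp hsum
    intro i
    exact (my_pt_iff (lam i)).mp (hpt i (Finset.mem_univ i))
  · intro hall
    refine ⟨?_, rfl⟩
    have hpt : ∀ i : Fin n, 2 * |lam i| = |lam i + 1| + |lam i - 1| :=
      fun i => (my_pt_iff (lam i)).mpr (hall i)
    have : ∑ i, 2 * |lam i| = ∑ i, (|lam i + 1| + |lam i - 1|) :=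
      Finset.sum_congr rfl fun i _ => hpt i
    rw [Finset.sum_add_distrib, ← hsymm, ← Finset.mul_sum] at this
    linarith
end

section
/- If G is a bipartite graph with Laplacian eigenvalues μ₁,...,μₙ, then the Laplacian eigenvalues of the k-th iterated extended double cover G^{k*} are μᵢ + 2r with multiplicity C(k, r), for each i = 1,...,n and r = 0,1,...,k. -/
open Matrix Polynomial BigOperators
open scoped Classical

/-- The extended double cover `G*` of a graph `G`: a bipartite graph on two copies of
the vertex set, where `xᵢ` is adjacent to `yⱼ` iff `i = j` or `vᵢ ∼ vⱼ` in `G`. -/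
def edc {V : Type*} (G : SimpleGraph V) : SimpleGraph (V ⊕ V) where
  Adj u v := match u, v with
    | Sum.inl i, Sum.inr j => i = j ∨ G.Adj i j
    | Sum.inr i, Sum.inl j => i = j ∨ G.Adj i j
    | _, _ => False
  symm := ⟨by rintro (i|i) (j|j) h <;> simp_all <;> exact h.imp Eq.symm fun hh => G.symm.symm _ _ hh⟩
  loopless := ⟨by rintro (i|i) h <;> simp_all⟩

/-- The vertex type of the k-th iterated extended double cover. -/
def iterV (V : Type*) : ℕ → Type _
  | 0 => V
  | k + 1 => iterV V k ⊕ iterV V k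

def iterVFintype (V : Type*) [Fintype V] : ∀ k, Fintype (iterV V k)
  | 0 => ‹Fintype V›
  | k + 1 => @instFintypeSum _ _ (iterVFintype V k) (iterVFintype V k)

def iterVDecEq (V : Type*) [DecidableEq V] : ∀ k, DecidableEq (iterV V k)
  | 0 => ‹DecidableEq V›
  | k + 1 => @instDecidableEqSum _ _ (iterVDecEq V k) (iterVDecEq V k)

instance {V : Type*} [Fintype V] {k : ℕ} : Fintype (iterV V k) := iterVFintype V k
instance {V : Type*} [DecidableEq V] {k : ℕ} : DecidableEq (iterV V k) := iterVDecEq V k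

/-- The k-th iterated extended double cover `G^{k*}`. -/
def edcIter {V : Type*} (G : SimpleGraph V) : (k : ℕ) → SimpleGraph (iterV V k)
  | 0 => G
  | k + 1 => edc (edcIter G k)

/-- The Laplacian matrix `L = D − A` of a graph. -/
noncomputable def lap {V : Type*} [Fintype V] [DecidableEq V] (G : SimpleGraph V) :
    Matrix V V ℝ :=
  Matrix.diagonal (fun i => (G.degree i : ℝ)) - G.adjMatrix ℝ


variable {m : Type*} [Fintype m] [DecidableEq m] {R : Type*} [CommRing R]

/-- det of a symmetric 2x2 block matrix. -/
lemma det_fromBlocks_symm (P Q : Matrix m m R) :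
    (Matrix.fromBlocks P Q Q P).det = (P + Q).det * (P - Q).det := by
  have h : Matrix.fromBlocks (1 : Matrix m m R) 1 0 1 * Matrix.fromBlocks P Q Q P *
      Matrix.fromBlocks 1 (-1) 0 1 = Matrix.fromBlocks (P + Q) 0 Q (P - Q) := by
    simp [Matrix.fromBlocks_multiply, Matrix.mul_neg]
    constructor <;> abel
  have hd := congrArg Matrix.det h
  rw [Matrix.det_mul, Matrix.det_mul, Matrix.det_fromBlocks_zero₂₁,
    Matrix.det_fromBlocks_zero₂₁, Matrix.det_fromBlocks_zero₁₂, Matrix.det_one] at hd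
  simpa using hd

lemma charpoly_fromBlocks_symm (M N : Matrix m m R) :
    (Matrix.fromBlocks M N N M).charpoly = (M + N).charpoly * (M - N).charpoly := by
  rw [Matrix.charpoly, Matrix.charmatrix_fromBlocks, det_fromBlocks_symm]
  congr 1
  · rw [Matrix.charpoly]
    congr 1
    ext i j
    by_cases h : i = j <;> simp [h, Matrix.charmatrix_apply_eq, Matrix.charmatrix_apply_ne, *] <;> ring
  · rw [Matrix.charpoly]
    congr 1
    ext i j
    by_cases h : i = j <;> simp [h, Matrix.charmatrix_apply_eq, Matrix.charmatrix_apply_ne, *] <;> ring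

/-- charpoly is invariant under conjugation by an involution. -/
lemma charpoly_conj_invol {S M : Matrix m m R} (hS : S * S = 1) :
    (S * M * S).charpoly = M.charpoly := by
  have hmap : (S.map (C : R → R[X])) * (S.map C) = 1 := by
    have := congrArg (Matrix.map · (C : R → R[X])) hS
    simpa [Matrix.map_mul] using this
  have hc : charmatrix (S * M * S) = (S.map C) * charmatrix M * (S.map C) := by
    simp only [charmatrix, RingHom.mapMatrix_apply, Matrix.map_mul]
    rw [Matrix.mul_sub, Matrix.sub_mul]
    congr 1
    rw [← (Matrix.scalar_commute (X : R[X]) (fun r => Commute.all _ _) (S.map C)).eq,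
      Matrix.mul_assoc, hmap, Matrix.mul_one]
  rw [Matrix.charpoly, hc, Matrix.det_mul, Matrix.det_mul, Matrix.charpoly]
  have : (S.map (C : R → R[X])).det * (S.map C).det = 1 := by
    rw [← Matrix.det_mul, hmap, Matrix.det_one]
  calc (S.map (C : R → R[X])).det * (charmatrix M).det * (S.map C).det
      = (S.map C).det * (S.map C).det * (charmatrix M).det := by ring
    _ = (charmatrix M).det := by rw [this, one_mul]

/-- charpoly after adding a scalar multiple of the identity. -/
lemma charpoly_add_smul_one (M : Matrix m m R) (c : R) :
    (M + c • (1 : Matrix m m R)).charpoly = (aeval (X - C c)) M.charpoly := by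
  rw [Matrix.charpoly, Matrix.charpoly, AlgHom.map_det]
  congr 1
  ext i j
  by_cases h : i = j <;>
    simp [h, Matrix.charmatrix_apply_eq, Matrix.charmatrix_apply_ne, Matrix.one_apply,
      AlgHom.mapMatrix_apply, map_sub, aeval_X, aeval_C, *]
  ring

section Graph

variable {V : Type*} [Fintype V] [DecidableEq V]

lemma edc_adj_inl_inr (G : SimpleGraph V) (i j : V) :
    (edc G).Adj (Sum.inl i) (Sum.inr j) ↔ i = j ∨ G.Adj i j := Iff.rfl

lemma edc_adj_inl_inl (G : SimpleGraph V) (i j : V) :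
    (edc G).Adj (Sum.inl i) (Sum.inl j) ↔ False := Iff.rfl

lemma edc_adj_inr_inr (G : SimpleGraph V) (i j : V) :
    (edc G).Adj (Sum.inr i) (Sum.inr j) ↔ False := Iff.rfl

lemma edc_adj_inr_inl (G : SimpleGraph V) (i j : V) :
    (edc G).Adj (Sum.inr i) (Sum.inl j) ↔ i = j ∨ G.Adj i j := Iff.rfl

lemma edc_neighborFinset_inl (G : SimpleGraph V) (i : V) :
    (edc G).neighborFinset (Sum.inl i) =
      (insert i (G.neighborFinset i)).map ⟨Sum.inr, Sum.inr_injective⟩ := by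
  ext w
  cases w with
  | inl j => simp [SimpleGraph.mem_neighborFinset, edc_adj_inl_inl]
  | inr j =>
    simp [SimpleGraph.mem_neighborFinset, edc_adj_inl_inr, eq_comm (a := i) (b := j)]

lemma edc_neighborFinset_inr (G : SimpleGraph V) (i : V) :
    (edc G).neighborFinset (Sum.inr i) =
      (insert i (G.neighborFinset i)).map ⟨Sum.inl, Sum.inl_injective⟩ := by
  ext w
  cases w with
  | inr j => simp [SimpleGraph.mem_neighborFinset, edc_adj_inr_inr]
  | inl j =>
    simp [SimpleGraph.mem_neighborFinset, edc_adj_inr_inl, eq_comm (a := i) (b := j)]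

lemma edc_degree_inl (G : SimpleGraph V) (i : V) :
    (edc G).degree (Sum.inl i) = G.degree i + 1 := by
  rw [SimpleGraph.degree, edc_neighborFinset_inl, Finset.card_map,
    Finset.card_insert_of_notMem (SimpleGraph.notMem_neighborFinset_self G i)]
  rfl

lemma edc_degree_inr (G : SimpleGraph V) (i : V) :
    (edc G).degree (Sum.inr i) = G.degree i + 1 := by
  rw [SimpleGraph.degree, edc_neighborFinset_inr, Finset.card_map,
    Finset.card_insert_of_notMem (SimpleGraph.notMem_neighborFinset_self G i)]
  rfl

lemma lap_edc_blocks (G : SimpleGraph V) :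
    lap (edc G) = Matrix.fromBlocks
      (Matrix.diagonal (fun i => (G.degree i : ℝ)) + 1) (-(G.adjMatrix ℝ + 1))
      (-(G.adjMatrix ℝ + 1)) (Matrix.diagonal (fun i => (G.degree i : ℝ)) + 1) := by
  ext u v
  cases u with
  | inl i =>
    cases v with
    | inl j =>
      by_cases h : i = j <;>
        simp [lap, Matrix.diagonal_apply, h, edc_degree_inl, Matrix.one_apply,
          SimpleGraph.adjMatrix_apply, edc_adj_inl_inl]
    | inr j =>
      by_cases h : i = j <;>
        simp [lap, Matrix.diagonal_apply, h, Matrix.one_apply,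
          SimpleGraph.adjMatrix_apply, edc_adj_inl_inr, SimpleGraph.irrefl]
  | inr i =>
    cases v with
    | inl j =>
      by_cases h : i = j <;>
        simp [lap, Matrix.diagonal_apply, h, Matrix.one_apply,
          SimpleGraph.adjMatrix_apply, edc_adj_inr_inl, SimpleGraph.irrefl]
    | inr j =>
      by_cases h : i = j <;>
        simp [lap, Matrix.diagonal_apply, h, edc_degree_inr, Matrix.one_apply,
          SimpleGraph.adjMatrix_apply, edc_adj_inr_inr]


lemma signless_charpoly (G : SimpleGraph V) (hbip : G.Colorable 2) :
    (Matrix.diagonal (fun i => (G.degree i : ℝ)) + G.adjMatrix ℝ).charpoly = (lap G).charpoly := by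
  obtain ⟨c⟩ := hbip
  set s : V → ℝ := fun i => if c i = 0 then 1 else -1 with hs
  have hs2 : ∀ i, s i * s i = 1 := by intro i; by_cases h : c i = 0 <;> simp [hs, h]
  have hSS : Matrix.diagonal s * Matrix.diagonal s = 1 := by
    rw [Matrix.diagonal_mul_diagonal]
    simp [hs2]
  have key : Matrix.diagonal s * lap G * Matrix.diagonal s =
      Matrix.diagonal (fun i => (G.degree i : ℝ)) + G.adjMatrix ℝ := by
    ext i j
    have hentry : (Matrix.diagonal s * lap G * Matrix.diagonal s) i j = s i * lap G i j * s j := by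
      rw [Matrix.mul_diagonal, Matrix.diagonal_mul]
    rw [hentry]
    have h01 : ∀ a : Fin 2, a = 0 ∨ a = 1 := by decide
    by_cases h : i = j
    · subst h
      simp only [lap, Matrix.sub_apply, Matrix.diagonal_apply_eq, SimpleGraph.adjMatrix_apply,
        SimpleGraph.irrefl, if_false, sub_zero, Matrix.add_apply]
      rw [mul_right_comm, hs2 i, one_mul]
      simp
    · by_cases ha : G.Adj i j
      · have hc : c i ≠ c j := c.valid ha
        have hsij : s i * s j = -1 := by
          rcases h01 (c i) with hi | hi <;> rcases h01 (c j) with hj | hj <;>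
            first
              | (exact absurd (hi.trans hj.symm) hc)
              | simp [hs, hi, hj]
        simp only [lap, Matrix.sub_apply, Matrix.diagonal_apply_ne _ h,
          SimpleGraph.adjMatrix_apply, ha, if_true, Matrix.add_apply, zero_sub, zero_add]
        linear_combination (-1 : ℝ) * hsij
      · simp [lap, Matrix.diagonal_apply_ne _ h, ha, SimpleGraph.adjMatrix_apply]
  rw [← key, charpoly_conj_invol hSS]

lemma edc_colorable {W : Type*} (G : SimpleGraph W) : (edc G).Colorable 2 :=
  ⟨SimpleGraph.Coloring.mk (Sum.elim (fun _ => 0) (fun _ => 1))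
    (by
      rintro (i|i) (j|j) h
      · exact h.elim
      · simp
      · simp
      · exact h.elim)⟩

lemma step_charpoly (G : SimpleGraph V) (hbip : G.Colorable 2) :
    (lap (edc G)).charpoly = (lap G).charpoly * (aeval (X - C (2:ℝ))) (lap G).charpoly := by
  rw [lap_edc_blocks, charpoly_fromBlocks_symm]
  congr 1
  · congr 1
    simp only [lap]
    abel
  · have h2 : Matrix.diagonal (fun i => (G.degree i : ℝ)) + 1 - -(G.adjMatrix ℝ + 1) =
        (Matrix.diagonal (fun i => (G.degree i : ℝ)) + G.adjMatrix ℝ) +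
          (2:ℝ) • (1 : Matrix V V ℝ) := by
      rw [two_smul]; abel
    rw [h2, charpoly_add_smul_one, signless_charpoly G hbip]

lemma prod_pow_choose_succ {M : Type*} [CommMonoid M] (g : ℕ → M) (k : ℕ) :
    ∏ r ∈ Finset.range (k + 1 + 1), g r ^ (k+1).choose r =
    (∏ r ∈ Finset.range (k + 1), g r ^ k.choose r) *
      ∏ r ∈ Finset.range (k + 1), g (r+1) ^ k.choose r := by
  rw [Finset.prod_range_succ' (fun r => g r ^ (k+1).choose r) (k+1)]
  simp only [Nat.choose_succ_succ, pow_add, Finset.prod_mul_distrib, Nat.choose_zero_right,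
    pow_one]
  have h1 : ∏ r ∈ Finset.range (k+1), g (r+1) ^ k.choose (r+1)
      = ∏ r ∈ Finset.range k, g (r+1) ^ k.choose (r+1) := by
    rw [Finset.prod_range_succ, Nat.choose_succ_self, pow_zero, mul_one]
  have h2 : ∏ r ∈ Finset.range (k+1), g r ^ k.choose r
      = (∏ r ∈ Finset.range k, g (r+1) ^ k.choose (r+1)) * g 0 := by
    rw [Finset.prod_range_succ' (fun r => g r ^ k.choose r) k]
    simp
  rw [h1, h2]
  simp [mul_comm, mul_assoc, mul_left_comm]

end Graph

lemma lap_charpoly_irrel {W : Type*} (i1 i2 : Fintype W) (d1 d2 : DecidableEq W)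
    (G : SimpleGraph W) :
    @Matrix.charpoly ℝ _ W d1 i1 (@lap W i1 d1 G) =
      @Matrix.charpoly ℝ _ W d2 i2 (@lap W i2 d2 G) := by
  have hd : d1 = d2 := by funext a b; exact Subsingleton.elim _ _
  have hi : i1 = i2 := Subsingleton.elim _ _
  subst hd; subst hi; rfl

/-- If `G` is a bipartite graph with Laplacian eigenvalues `μ₁,…,μₙ`,
then the Laplacian eigenvalues of the k-th iterated extended double cover `G^{k*}`
are `μᵢ + 2r` with multiplicity `C(k, r)`, for `i = 1,…,n` and `r = 0,1,…,k`. -/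
theorem stmt10 {n : ℕ} (G : SimpleGraph (Fin n)) (hbip : G.Colorable 2)
    (μ : Fin n → ℝ) (hspec : (lap G).charpoly = ∏ i, (X - C (μ i))) (k : ℕ) :
    (lap (edcIter G k)).charpoly =
      ∏ i, ∏ r ∈ Finset.range (k + 1), (X - C (μ i + 2 * r)) ^ k.choose r := by
  have hbk : ∀ k, (edcIter G k).Colorable 2 := by
    intro k
    cases k with
    | zero => exact hbip
    | succ k => exact edc_colorable _
  induction k with
  | zero =>
    have key : (lap (edcIter G 0)).charpoly = (lap G).charpoly :=
      lap_charpoly_irrel _ _ _ _ _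
    rw [key]
    simpa using hspec
  | succ k ih =>
    have key : (lap (edcIter G (k + 1))).charpoly = (lap (edc (edcIter G k))).charpoly :=
      lap_charpoly_irrel _ _ _ _ _
    rw [key, step_charpoly (edcIter G k) (hbk k), ih]
    have hφ : (aeval (X - C (2:ℝ)))
        (∏ i, ∏ r ∈ Finset.range (k + 1), (X - C (μ i + 2 * r)) ^ k.choose r) =
        ∏ i, ∏ r ∈ Finset.range (k + 1), (X - C (μ i + 2 * ((r : ℕ) + 1 : ℕ))) ^ k.choose r := by
      rw [map_prod]
      refine Finset.prod_congr rfl fun i _ => ?_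
      rw [map_prod]
      refine Finset.prod_congr rfl fun r _ => ?_
      rw [map_pow, map_sub, aeval_X, aeval_C, Polynomial.algebraMap_eq]
      congr 1
      rw [sub_sub, ← C_add]
      congr 1
      push_cast
      ring
    rw [hφ, ← Finset.prod_mul_distrib]
    refine (Finset.prod_congr rfl fun i _ => ?_).symm
    have := prod_pow_choose_succ (fun r => X - C (μ i + 2 * (r : ℕ))) k
    simpa using this
end
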